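/- Decomposition lemma: Let (R, W, d) be a filtered presentation of vector spaces over a field K in which every relator is either a reduction relator or a horizontal relator. If x lies in the span of the relators of degree exactly n and d(x) ∈ Fₙ₋₁W, then there exist canceling sequences s¹, …, s^k of degree n and scalars b₁, …, b_k ∈ K such that x = b₁·(Σs¹) + … + b_k·(Σs^k). -/

import Mathlib

/-- A *filtered presentation of vector spaces* over a field `K`: `K`-vector spaces `R` and `W`,
a basis of `W` indexed by `I` whose elements are called *webs*, together with a degree
function `deg : I → ℕ`, a basis of `R` indexed by `P` whose elements are called *relators*,
and a `K`-linear map `d : R → W` with `d [r] ≠ 0` for every relator `r`. -/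
structure FilteredPresentation (K W R I P : Type*) [Field K]
    [AddCommGroup W] [Module K W] [AddCommGroup R] [Module K R] where
  /-- the basis of webs -/
  web : Module.Basis I K W
  /-- the degree of each web -/
  deg : I → ℕ
  /-- the basis of relators -/
  rel : Module.Basis P K R
  /-- the structure map of the presentation -/
  d : R →ₗ[K] W
  /-- `d` is nonzero on every relator -/
  d_rel_ne_zero : ∀ p : P, d (rel p) ≠ 0

namespace FilteredPresentation

variable {K W R I P : Type*} [Field K]
  [AddCommGroup W] [Module K W] [AddCommGroup R] [Module K R]
  (FP : FilteredPresentation K W R I P)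

/-- `FₙW` : the span of the webs of degree at most `n`. -/
def FWle (n : ℕ) : Submodule K W :=
  Submodule.span K ((fun i => FP.web i) '' {i | FP.deg i ≤ n})

/-- `Fₙ₋₁W` : the span of the webs of degree strictly less than `n`
(so its value at `n = 0` is `F₋₁W = 0`). -/
def FWlt (n : ℕ) : Submodule K W :=
  Submodule.span K ((fun i => FP.web i) '' {i | FP.deg i < n})

/-- The degree `|r|` of a relator: the least `n` such that `d [r] ∈ FₙW`. -/
noncomputable def rdeg (p : P) : ℕ :=
  sInf {n : ℕ | FP.d (FP.rel p) ∈ FP.FWle n}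

/-- `Fₙ₋₁R` : the span of the relators of degree strictly less than `n`. -/
def FRlt (n : ℕ) : Submodule K R :=
  Submodule.span K ((fun p => FP.rel p) '' {p | FP.rdeg p < n})

/-- The *leading term* at filtration level `n` of an element `x` of `R`: the class of `d x`
in `W ⧸ Fₙ₋₁W`.  (For a relator of degree `n` this class lies in `grₙW = FₙW/Fₙ₋₁W`,
realized inside the ambient quotient `W ⧸ Fₙ₋₁W`.) -/
def lead (n : ℕ) (x : R) : W ⧸ FP.FWlt n :=
  (FP.FWlt n).mkQ (FP.d x)

/-- A relator is a *reduction relator* if its leading term is the class of a single web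
(necessarily of degree `|r|`). -/
def IsReductionRel (p : P) : Prop :=
  ∃ i : I, FP.deg i = FP.rdeg p ∧
    FP.lead (FP.rdeg p) (FP.rel p) = (FP.FWlt (FP.rdeg p)).mkQ (FP.web i)

/-- A relator is a *horizontal relator* if its leading term is the difference `u - v` of the
classes of two distinct webs (necessarily of degree `|r|`). -/
def IsHorizontalRel (p : P) : Prop :=
  ∃ i j : I, i ≠ j ∧ FP.deg i = FP.rdeg p ∧ FP.deg j = FP.rdeg p ∧
    FP.lead (FP.rdeg p) (FP.rel p) =
      (FP.FWlt (FP.rdeg p)).mkQ (FP.web i) - (FP.FWlt (FP.rdeg p)).mkQ (FP.web j)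

/-- A *canceling sequence* of degree `n`: a (nonempty) finite sequence `s₁, …, s_m` of
signed relators of degree `n` (each `sᵢ` is `±[r]` for a relator `r` of degree `n`),
together with elements `w₀, w₁, …, w_m` of `W ⧸ Fₙ₋₁W`, each either `0` or the class of a
single web of degree `n`, with `w₁, …, w_{m-1}` nonzero, `w₀ = w_m`, and such that the
leading term of `sᵢ` is `wᵢ - wᵢ₋₁` for all `i`. -/
structure CancelingSeq (n : ℕ) where
  /-- the underlying list `s₁, …, s_m` of signed relators -/
  s : List R
  /-- the witnessing list `w₀, w₁, …, w_m` -/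
  w : List (W ⧸ FP.FWlt n)
  nonempty : 0 < s.length
  len : w.length = s.length + 1
  signed : ∀ x ∈ s, ∃ p : P, (x = FP.rel p ∨ x = -FP.rel p) ∧ FP.rdeg p = n
  w_mem : ∀ u ∈ w, u = 0 ∨ ∃ i : I, FP.deg i = n ∧ u = (FP.FWlt n).mkQ (FP.web i)
  w_mid_ne : ∀ k : ℕ, 0 < k → k < s.length → w.getD k 0 ≠ 0
  w_cycle : w.getD 0 0 = w.getD s.length 0
  lead_step : ∀ k < s.length,
    FP.lead n (s.getD k 0) = w.getD (k + 1) 0 - w.getD k 0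

namespace CancelingSeq

variable {FP} {n : ℕ}

/-- `Σs` : the sum `s₁ + ⋯ + s_m ∈ R` of the signed relators of a canceling sequence. -/
def total (c : FP.CancelingSeq n) : R := c.s.sum

/-- A canceling sequence is a *reduction sequence* if `w₀ = w_m = 0`. -/
def IsReductionSeq (c : FP.CancelingSeq n) : Prop :=
  c.w.getD 0 0 = 0 ∧ c.w.getD c.s.length 0 = 0

/-- A canceling sequence is a *horizontal sequence* if it is not a reduction sequence. -/
def IsHorizontalSeq (c : FP.CancelingSeq n) : Prop :=
  ¬ c.IsReductionSeq

/-- A canceling sequence `s` of degree `n` is *consistently reducible* if there exists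
`y ∈ Fₙ₋₁R` with `d y = d (Σs)`. -/
def ConsistentlyReducible (c : FP.CancelingSeq n) : Prop :=
  ∃ y ∈ FP.FRlt n, FP.d y = FP.d c.total

end CancelingSeq

/-- The presentation is *E¹-convergent* (its associated two-column spectral sequence
converges at the first page) if for every `n ∈ ℕ` and every `x` in the span of the
relators of degree exactly `n` with `d x ∈ Fₙ₋₁W`, there exists `y ∈ Fₙ₋₁R` with
`d y = d x`. -/
def E1Convergent : Prop :=
  ∀ n : ℕ, ∀ x ∈ Submodule.span K ((fun p => FP.rel p) '' {p | FP.rdeg p = n}),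
    FP.d x ∈ FP.FWlt n → ∃ y ∈ FP.FRlt n, FP.d y = FP.d x

end FilteredPresentation


section Walk

variable {V : Type*} {P : Type*} (z : V) (S : Finset P) (t b : P → V)

def WalkPath (k : ℕ) (e : ℕ → P) (u : ℕ → V) : Prop :=
  1 ≤ k ∧
  (∀ i, 1 ≤ i → i ≤ k → e i ∈ S) ∧
  (∀ i j, 1 ≤ i → i ≤ k → 1 ≤ j → j ≤ k → e i = e j → i = j) ∧
  (∀ i j, i ≤ k → j ≤ k → u i = u j → i = j) ∧
  (∀ i, 1 ≤ i → i ≤ k → u i ≠ z) ∧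
  (∀ i, 1 ≤ i → i ≤ k →
    (t (e i) = u i ∧ b (e i) = u (i-1)) ∨ (t (e i) = u (i-1) ∧ b (e i) = u i))

def WalkCycle : Prop :=
  ∃ (m : ℕ) (E : ℕ → P) (U : ℕ → V),
    1 ≤ m ∧
    (∀ i, 1 ≤ i → i ≤ m → E i ∈ S) ∧
    (∀ i j, 1 ≤ i → i ≤ m → 1 ≤ j → j ≤ m → E i = E j → i = j) ∧
    U 0 = U m ∧
    (∀ i, 1 ≤ i → i < m → U i ≠ z) ∧
    (∀ i, 1 ≤ i → i ≤ m →
      (t (E i) = U i ∧ b (E i) = U (i-1)) ∨ (t (E i) = U (i-1) ∧ b (E i) = U i))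

lemma walk_lemma
    (hne : ∀ p ∈ S, t p ≠ b p)
    (balance : ∀ u : V, u ≠ z → ∀ p ∈ S, (t p = u ∨ b p = u) →
      ∃ q ∈ S, q ≠ p ∧ (t q = u ∨ b q = u))
    (hS : S.Nonempty) : WalkCycle z S t b := by
  classical
  have step : ∀ (k : ℕ) (e : ℕ → P) (u : ℕ → V), WalkPath z S t b k e u →
      WalkCycle z S t b ∨ ∃ e' u', WalkPath z S t b (k+1) e' u' := by
    rintro k e u ⟨hk, hmem, hinjE, hinjU, hnz, hor⟩
    have hukz : u k ≠ z := hnz k hk le_rfl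
    have hek : e k ∈ S := hmem k hk le_rfl
    have hend : t (e k) = u k ∨ b (e k) = u k := by
      rcases hor k hk le_rfl with ⟨h1, _⟩ | ⟨_, h2⟩
      · exact Or.inl h1
      · exact Or.inr h2
    obtain ⟨q, hqS, hqne, hq⟩ := balance (u k) hukz (e k) hek hend
    have hfresh : ∀ i, 1 ≤ i → i ≤ k → q ≠ e i := by
      intro i h1 h2 hqe
      rw [hqe] at hq
      have hcases : u k = u i ∨ u k = u (i - 1) := by
        rcases hor i h1 h2 with ⟨ht, hb⟩ | ⟨ht, hb⟩ <;> rcases hq with hq | hq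
        · exact Or.inl (hq.symm.trans ht)
        · exact Or.inr (hq.symm.trans hb)
        · exact Or.inr (hq.symm.trans ht)
        · exact Or.inl (hq.symm.trans hb)
      rcases hcases with hc | hc
      · have hki := hinjU k i le_rfl h2 hc
        apply hqne; rw [hqe, ← hki]
      · have hki := hinjU k (i-1) le_rfl (by omega) hc
        omega
    set u' := if t q = u k then b q else t q with hu'
    have hqt : (t q = u k ∧ b q = u') ∨ (t q = u' ∧ b q = u k) := by
      by_cases h : t q = u k
      · left; exact ⟨h, by rw [hu', if_pos h]⟩
      · right
        refine ⟨by rw [hu', if_neg h], ?_⟩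
        rcases hq with hq | hq
        · exact absurd hq h
        · exact hq
    have hu'ne : u' ≠ u k := by
      intro hh
      apply hne q hqS
      rcases hqt with ⟨h1, h2⟩ | ⟨h1, h2⟩
      · rw [h1, h2, hh]
      · rw [h1, h2, hh]
    by_cases hA : ∃ j ≤ k, u j = u'
    · left
      obtain ⟨j, hjk, hju⟩ := hA
      have hjlt : j < k := by
        rcases lt_or_eq_of_le hjk with h | h
        · exact h
        · exfalso; exact hu'ne (by rw [← hju, h])
      set m := k - j + 1 with hm
      refine ⟨m, (fun i => if i = m then q else e (j + i)),
        (fun i => if i = m then u j else u (j + i)), by omega, ?_, ?_, ?_, ?_, ?_⟩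
      · intro i h1 h2
        by_cases h : i = m
        · simpa [h] using hqS
        · simp only [if_neg h]
          exact hmem _ (by omega) (by omega)
      · intro i i' h1 h2 h1' h2'
        by_cases h : i = m <;> by_cases h' : i' = m
        · omega
        · simp only [if_pos h, if_neg h']
          intro hqq; exact absurd hqq (hfresh _ (by omega) (by omega))
        · simp only [if_neg h, if_pos h']
          intro hqq; exact absurd hqq.symm (hfresh _ (by omega) (by omega))
        · simp only [if_neg h, if_neg h']
          intro hqq
          have := hinjE _ _ (by omega) (by omega) (by omega) (by omega) hqq
          omega
      · have h0 : (0 : ℕ) ≠ m := by omega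
        simp [if_neg h0]
      · intro i h1 h2
        have h : i ≠ m := by omega
        simp only [if_neg h]
        exact hnz _ (by omega) (by omega)
      · intro i h1 h2
        by_cases h : i = m
        · have hm1 : i - 1 ≠ m := by omega
          have hkey : j + (i - 1) = k := by omega
          simp only [if_pos h, if_neg hm1, hkey]
          rcases hqt with ⟨ha, hb⟩ | ⟨ha, hb⟩
          · right; exact ⟨ha, hb.trans hju.symm⟩
          · left; exact ⟨ha.trans hju.symm, hb⟩
        · have hm1 : i - 1 ≠ m := by omega
          have hkey : j + (i - 1) = j + i - 1 := by omega
          simp only [if_neg h, if_neg hm1, hkey]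
          exact hor _ (by omega) (by omega)
    · push_neg at hA
      right
      by_cases hz : u' = z
      · -- reversal: note ∀ j ≤ k, u j ≠ z
        have huz : ∀ j, j ≤ k → u j ≠ z := by
          intro j hj hju
          exact hA j hj (by rw [hju, hz])
        refine ⟨(fun i => if i = 1 then q else e (k + 2 - i)),
          (fun i => if i = 0 then z else u (k + 1 - i)), by omega, ?_, ?_, ?_, ?_, ?_⟩
        · intro i h1 h2
          by_cases h : i = 1
          · simpa [h] using hqS
          · simp only [if_neg h]
            exact hmem _ (by omega) (by omega)
        · intro i i' h1 h2 h1' h2'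
          by_cases h : i = 1 <;> by_cases h' : i' = 1
          · omega
          · simp only [if_pos h, if_neg h']
            intro hqq; exact absurd hqq (hfresh _ (by omega) (by omega))
          · simp only [if_neg h, if_pos h']
            intro hqq; exact absurd hqq.symm (hfresh _ (by omega) (by omega))
          · simp only [if_neg h, if_neg h']
            intro hqq
            have := hinjE _ _ (by omega) (by omega) (by omega) (by omega) hqq
            omega
        · intro i i' hi hi'
          by_cases h : i = 0 <;> by_cases h' : i' = 0
          · omega
          · simp only [if_pos h, if_neg h']
            intro hqq; exact absurd hqq.symm (huz _ (by omega))
          · simp only [if_neg h, if_pos h']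
            intro hqq; exact absurd hqq (huz _ (by omega))
          · simp only [if_neg h, if_neg h']
            intro hqq
            have := hinjU _ _ (by omega : k + 1 - i ≤ k) (by omega : k + 1 - i' ≤ k) hqq
            omega
        · intro i h1 h2
          have h : i ≠ 0 := by omega
          simp only [if_neg h]
          exact huz _ (by omega)
        · intro i h1 h2
          by_cases h : i = 1
          · have e1 : i - 1 = 0 := by omega
            have e2 : i ≠ 0 := by omega
            have e3 : k + 1 - i = k := by omega
            simp only [if_pos h, e1, if_neg e2, e3, reduceIte]
            rcases hqt with ⟨ha, hb⟩ | ⟨ha, hb⟩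
            · left; exact ⟨ha, hb.trans hz⟩
            · right; exact ⟨ha.trans hz, hb⟩
          · have e2 : i ≠ 0 := by omega
            have e3 : i - 1 ≠ 0 := by omega
            have e4 : k + 1 - (i - 1) = k + 2 - i := by omega
            have e5 : k + 1 - i = (k + 2 - i) - 1 := by omega
            simp only [if_neg h, if_neg e2, if_neg e3, e4, e5]
            rcases hor (k + 2 - i) (by omega) (by omega) with ⟨ha, hb⟩ | ⟨ha, hb⟩
            · right; exact ⟨ha, hb⟩
            · left; exact ⟨ha, hb⟩
      · -- extension
        refine ⟨(fun i => if i = k + 1 then q else e i),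
          (fun i => if i = k + 1 then u' else u i), by omega, ?_, ?_, ?_, ?_, ?_⟩
        · intro i h1 h2
          by_cases h : i = k + 1
          · simpa [h] using hqS
          · simp only [if_neg h]
            exact hmem _ (by omega) (by omega)
        · intro i i' h1 h2 h1' h2'
          by_cases h : i = k + 1 <;> by_cases h' : i' = k + 1
          · omega
          · simp only [if_pos h, if_neg h']
            intro hqq; exact absurd hqq (hfresh _ (by omega) (by omega))
          · simp only [if_neg h, if_pos h']
            intro hqq; exact absurd hqq.symm (hfresh _ (by omega) (by omega))
          · simp only [if_neg h, if_neg h']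
            intro hqq
            exact hinjE _ _ (by omega) (by omega) (by omega) (by omega) hqq
        · intro i i' hi hi'
          by_cases h : i = k + 1 <;> by_cases h' : i' = k + 1
          · omega
          · simp only [if_pos h, if_neg h']
            intro hqq; exact absurd hqq.symm (hA _ (by omega))
          · simp only [if_neg h, if_pos h']
            intro hqq; exact absurd hqq (hA _ (by omega))
          · simp only [if_neg h, if_neg h']
            intro hqq
            exact hinjU _ _ (by omega) (by omega) hqq
        · intro i h1 h2
          by_cases h : i = k + 1
          · simpa [h] using hz
          · simp only [if_neg h]
            exact hnz _ (by omega) (by omega)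
        · intro i h1 h2
          by_cases h : i = k + 1
          · have e1 : i - 1 ≠ k + 1 := by omega
            have e2 : i - 1 = k := by omega
            have e3 : k ≠ k + 1 := by omega
            simp only [if_pos h, if_neg e1, e2, if_neg e3]
            rcases hqt with ⟨ha, hb⟩ | ⟨ha, hb⟩
            · right; exact ⟨ha, hb⟩
            · left; exact ⟨ha, hb⟩
          · have e1 : i - 1 ≠ k + 1 := by omega
            simp only [if_neg h, if_neg e1]
            exact hor _ (by omega) (by omega)
  have bound : ∀ k (e : ℕ → P) (u : ℕ → V), WalkPath z S t b k e u → k ≤ S.card := by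
    rintro k e u ⟨hk, hmem, hinjE, -, -, -⟩
    have := Finset.card_le_card_of_injOn e
      (fun i hi => hmem i (Finset.mem_Icc.mp hi).1 (Finset.mem_Icc.mp hi).2)
      (fun i hi j hj hij => hinjE i j (Finset.mem_Icc.mp hi).1 (Finset.mem_Icc.mp hi).2
        (Finset.mem_Icc.mp hj).1 (Finset.mem_Icc.mp hj).2 hij)
    simpa [Nat.card_Icc] using this
  have main : ∀ (fuel k : ℕ) (e : ℕ → P) (u : ℕ → V), WalkPath z S t b k e u →
      S.card ≤ k + fuel → WalkCycle z S t b := by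
    intro fuel
    induction fuel with
    | zero =>
      intro k e u hp hc
      rcases step k e u hp with h | ⟨e', u', hp'⟩
      · exact h
      · have := bound _ _ _ hp'; omega
    | succ f ih =>
      intro k e u hp hc
      rcases step k e u hp with h | ⟨e', u', hp'⟩
      · exact h
      · exact ih _ _ _ hp' (by omega)
  obtain ⟨p0, hp0⟩ := hS
  have hne0 : t p0 ≠ b p0 := hne p0 hp0
  have init : ∀ (v0 v1 : V), v0 ≠ v1 → v1 ≠ z →
      ((t p0 = v1 ∧ b p0 = v0) ∨ (t p0 = v0 ∧ b p0 = v1)) →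
      WalkPath z S t b 1 (fun _ => p0) (fun i => if i = 0 then v0 else v1) := by
    intro v0 v1 h01 h1z hor0
    refine ⟨le_rfl, fun _ _ _ => hp0, fun i j h1 h2 h3 h4 _ => by omega, ?_, ?_, ?_⟩
    · intro i j hi hj hij
      by_cases h : i = 0 <;> by_cases h' : j = 0
      · omega
      · simp only [h, h', reduceIte] at hij; exact absurd hij h01
      · simp only [h, h', reduceIte] at hij; exact absurd hij.symm h01
      · omega
    · intro i hi1 hi2
      have : i = 1 := by omega
      subst this
      simpa using h1z
    · intro i hi1 hi2
      have : i = 1 := by omega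
      subst this
      simpa using hor0
  by_cases hbz : b p0 = z
  · have htz : t p0 ≠ z := fun h => hne0 (h.trans hbz.symm)
    exact main S.card 1 _ _ (init (b p0) (t p0) (fun h => hne0 h.symm) htz (Or.inl ⟨rfl, rfl⟩))
      (by omega)
  · exact main S.card 1 _ _ (init (t p0) (b p0) hne0 hbz (Or.inr ⟨rfl, rfl⟩)) (by omega)

end Walk

namespace FilteredPresentation

variable {K W R I P : Type*} [Field K]
  [AddCommGroup W] [Module K W] [AddCommGroup R] [Module K R]
  (FP : FilteredPresentation K W R I P)

open Classical in
/-- The coordinate functional of a web of degree at least `n` descends to `W ⧸ Fₙ₋₁W`. -/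
lemma exists_coordQ (n : ℕ) (i : I) (h : n ≤ FP.deg i) :
    ∃ φ : (W ⧸ FP.FWlt n) →ₗ[K] K,
      ∀ j : I, φ ((FP.FWlt n).mkQ (FP.web j)) = if j = i then 1 else 0 := by
  have hker : FP.FWlt n ≤ LinearMap.ker (FP.web.coord i) := by
    rw [FWlt, Submodule.span_le]
    rintro w ⟨j, hj, rfl⟩
    simp only [Set.mem_setOf_eq] at hj
    have hji : j ≠ i := by
      intro hji; rw [hji] at hj; omega
    simp [LinearMap.mem_ker, Module.Basis.coord_apply, Module.Basis.repr_self, Finsupp.single_apply, hji]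
  refine ⟨Submodule.liftQ _ _ hker, fun j => ?_⟩
  rw [Submodule.mkQ_apply, Submodule.liftQ_apply]
  simp [Module.Basis.coord_apply, Module.Basis.repr_self, Finsupp.single_apply]

lemma lead_repr_sum (n : ℕ) (x : R) :
    FP.lead n x =
      ∑ p ∈ (FP.rel.repr x).support, (FP.rel.repr x) p • FP.lead n (FP.rel p) := by
  conv_lhs => rw [← FP.rel.linearCombination_repr x]
  rw [Finsupp.linearCombination_apply, Finsupp.sum]
  simp only [lead, map_sum, map_smul]

lemma lead_smul (n : ℕ) (a : K) (x : R) : FP.lead n (a • x) = a • FP.lead n x := by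
  simp only [lead, map_smul]

lemma lead_sub (n : ℕ) (x y : R) : FP.lead n (x - y) = FP.lead n x - FP.lead n y := by
  simp only [lead, map_sub]

end FilteredPresentation

/-- **Decomposition lemma.**
Let `(R, W, d)` be a filtered presentation of vector spaces over a field `K` in which every
relator is either a reduction relator or a horizontal relator.  If `x` lies in the span of
the relators of degree exactly `n` and `d x ∈ Fₙ₋₁W`, then there exist canceling sequences
`s¹, …, sᵏ` of degree `n` and scalars `b₁, …, b_k ∈ K` with
`x = b₁ • (Σs¹) + ⋯ + b_k • (Σsᵏ)`. -/
theorem FilteredPresentation.decomposition_into_canceling_sequences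
    {K W R I P : Type*} [Field K]
    [AddCommGroup W] [Module K W] [AddCommGroup R] [Module K R]
    (FP : FilteredPresentation K W R I P)
    (hrel : ∀ p : P, FP.IsReductionRel p ∨ FP.IsHorizontalRel p)
    (n : ℕ) (x : R)
    (hx : x ∈ Submodule.span K ((fun p => FP.rel p) '' {p | FP.rdeg p = n}))
    (hdx : FP.d x ∈ FP.FWlt n) :
    ∃ (k : ℕ) (c : Fin k → FP.CancelingSeq n) (b : Fin k → K),
      x = ∑ j : Fin k, b j • (c j).total := by
  classical
  have hvinj : ∀ i j : I, FP.deg i = n → FP.deg j = n →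
      (FP.FWlt n).mkQ (FP.web i) = (FP.FWlt n).mkQ (FP.web j) → i = j := by
    intro i j hi hj hij
    obtain ⟨φ, hφ⟩ := FP.exists_coordQ n i hi.ge
    have h1 := hφ i
    have h2 := hφ j
    rw [if_pos rfl] at h1
    rw [← hij, h1] at h2
    by_contra hne
    rw [if_neg (fun hh => hne hh.symm)] at h2
    exact one_ne_zero h2
  have hvne : ∀ i : I, FP.deg i = n → (FP.FWlt n).mkQ (FP.web i) ≠ 0 := by
    intro i hi h0
    obtain ⟨φ, hφ⟩ := FP.exists_coordQ n i hi.ge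
    have h1 := hφ i
    rw [if_pos rfl, h0, map_zero] at h1
    exact one_ne_zero h1.symm
  have hends : ∀ p : P, FP.rdeg p = n → ∃ tp bp : W ⧸ FP.FWlt n,
      (tp = 0 ∨ ∃ i, FP.deg i = n ∧ tp = (FP.FWlt n).mkQ (FP.web i)) ∧
      (bp = 0 ∨ ∃ i, FP.deg i = n ∧ bp = (FP.FWlt n).mkQ (FP.web i)) ∧
      tp ≠ bp ∧ FP.lead n (FP.rel p) = tp - bp := by
    intro p hp
    rcases hrel p with ⟨i, hdeg, hlead⟩ | ⟨i, j, hij, hdi, hdj, hlead⟩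
    · rw [hp] at hdeg hlead
      exact ⟨(FP.FWlt n).mkQ (FP.web i), 0, Or.inr ⟨i, hdeg, rfl⟩, Or.inl rfl,
        hvne i hdeg, by rw [hlead, sub_zero]⟩
    · rw [hp] at hdi hdj hlead
      exact ⟨(FP.FWlt n).mkQ (FP.web i), (FP.FWlt n).mkQ (FP.web j),
        Or.inr ⟨i, hdi, rfl⟩, Or.inr ⟨j, hdj, rfl⟩,
        fun hh => hij (hvinj i j hdi hdj hh), hlead⟩
  choose! t b hta hba htb hlead using hends
  suffices H : ∀ N : ℕ, ∀ y : R, (FP.rel.repr y).support.card ≤ N →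
      ↑(FP.rel.repr y).support ⊆ {p : P | FP.rdeg p = n} → FP.d y ∈ FP.FWlt n →
      ∃ (k : ℕ) (c : Fin k → FP.CancelingSeq n) (bb : Fin k → K),
        y = ∑ j : Fin k, bb j • (c j).total by
    exact H (FP.rel.repr x).support.card x le_rfl (FP.rel.mem_span_image.mp hx) hdx
  intro N
  induction N with
  | zero =>
    intro y hcard hsupp hdy
    have h0 : FP.rel.repr y = 0 :=
      Finsupp.support_eq_empty.mp (Finset.card_eq_zero.mp (Nat.le_antisymm hcard (Nat.zero_le _)))
    exact ⟨0, Fin.elim0, Fin.elim0, by simp [FP.rel.repr.map_eq_zero_iff.mp h0]⟩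
  | succ N ih =>
    intro y hcard hsupp hdy
    by_cases hy0 : FP.rel.repr y = 0
    · exact ⟨0, Fin.elim0, Fin.elim0, by simp [FP.rel.repr.map_eq_zero_iff.mp hy0]⟩
    set a : P →₀ K := FP.rel.repr y with ha
    set S : Finset P := a.support with hS
    have hSne : S.Nonempty := Finsupp.support_nonempty_iff.mpr hy0
    have hSdeg : ∀ p ∈ S, FP.rdeg p = n := fun p hp => hsupp hp
    have hne : ∀ p ∈ S, t p ≠ b p := fun p hp => htb p (hSdeg p hp)
    have hleady : FP.lead n y = 0 := by
      rw [FilteredPresentation.lead, Submodule.mkQ_apply, Submodule.Quotient.mk_eq_zero]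
      exact hdy
    have hbal : ∀ u : W ⧸ FP.FWlt n, u ≠ 0 → ∀ p ∈ S, (t p = u ∨ b p = u) →
        ∃ q ∈ S, q ≠ p ∧ (t q = u ∨ b q = u) := by
      intro u hu p hp hpu
      by_contra hcon
      push_neg at hcon
      have hadm : u = 0 ∨ ∃ i, FP.deg i = n ∧ u = (FP.FWlt n).mkQ (FP.web i) := by
        rcases hpu with h | h
        · rw [← h]; exact hta p (hSdeg p hp)
        · rw [← h]; exact hba p (hSdeg p hp)
      rcases hadm with h | ⟨i, hdi, hui⟩
      · exact hu h
      obtain ⟨φ, hφ⟩ := FP.exists_coordQ n i hdi.ge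
      have hφadm : ∀ v : W ⧸ FP.FWlt n,
          (v = 0 ∨ ∃ j, FP.deg j = n ∧ v = (FP.FWlt n).mkQ (FP.web j)) →
          φ v = if v = u then 1 else 0 := by
        intro v hv
        rcases hv with rfl | ⟨j, hdj, rfl⟩
        · rw [map_zero, if_neg (fun hh => hu hh.symm)]
        · rw [hφ j]
          by_cases hji : j = i
          · rw [if_pos hji, if_pos (by rw [hji, ← hui])]
          · rw [if_neg hji, if_neg (fun hh => hji (hvinj j i hdj hdi (by rw [hh]; exact hui)))]
      have hsum : ∑ q ∈ S, a q * (φ (t q) - φ (b q)) = 0 := by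
        have hls : FP.lead n y = ∑ q ∈ S, a q • (t q - b q) := by
          rw [FP.lead_repr_sum n y]
          refine Finset.sum_congr rfl (fun q hq => ?_)
          rw [hlead q (hSdeg q hq)]
        have h0 : φ (FP.lead n y) = 0 := by rw [hleady, map_zero]
        rw [hls, map_sum] at h0
        rw [← h0]
        refine Finset.sum_congr rfl (fun q hq => ?_)
        rw [map_smul, map_sub, smul_eq_mul]
      have hterm : ∀ q ∈ S, q ≠ p → a q * (φ (t q) - φ (b q)) = 0 := by
        intro q hq hqp
        obtain ⟨h1, h2⟩ := hcon q hq hqp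
        rw [hφadm (t q) (hta q (hSdeg q hq)), hφadm (b q) (hba q (hSdeg q hq)),
          if_neg h1, if_neg h2]
        ring
      have hfp : a p * (φ (t p) - φ (b p)) = 0 := by
        rw [← Finset.sum_eq_single_of_mem p hp hterm]; exact hsum
      have hap : a p ≠ 0 := Finsupp.mem_support_iff.mp hp
      rw [hφadm (t p) (hta p (hSdeg p hp)), hφadm (b p) (hba p (hSdeg p hp))] at hfp
      rcases hpu with h | h
      · have hbne : ¬ b p = u := fun hh => hne p hp (h.trans hh.symm)
        rw [if_pos h, if_neg hbne, sub_zero, mul_one] at hfp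
        exact hap hfp
      · have htne : ¬ t p = u := fun hh => hne p hp (hh.trans h.symm)
        rw [if_neg htne, if_pos h, zero_sub, mul_neg, mul_one, neg_eq_zero] at hfp
        exact hap hfp
    obtain ⟨m, E, U, hm, hES, hEinj, hU0, hUnz, hEor⟩ :=
      walk_lemma (0 : W ⧸ FP.FWlt n) S t b hne hbal hSne
    set sg : ℕ → K := fun i => if t (E i) = U i then 1 else -1 with hsg
    have hsg2 : ∀ i, sg i * sg i = 1 := by
      intro i
      simp only [hsg]
      by_cases h : t (E i) = U i
      · rw [if_pos h]; ring
      · rw [if_neg h]; ring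
    have hrdegE : ∀ i, 1 ≤ i → i ≤ m → FP.rdeg (E i) = n :=
      fun i h1 h2 => hSdeg _ (hES i h1 h2)
    have hstep : ∀ i, 1 ≤ i → i ≤ m →
        FP.lead n (sg i • FP.rel (E i)) = U i - U (i - 1) := by
      intro i h1 h2
      rw [FP.lead_smul]
      have hl := hlead (E i) (hrdegE i h1 h2)
      rcases hEor i h1 h2 with ⟨ht, hb⟩ | ⟨ht, hb⟩
      · simp only [hsg]
        rw [if_pos ht, one_smul, hl, ht, hb]
      · have hcond : ¬ t (E i) = U i := fun hcc => hne (E i) (hES i h1 h2) (hcc.trans hb.symm)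
        simp only [hsg]
        rw [if_neg hcond, hl, ht, hb, neg_one_smul, neg_sub]
    have hUadm : ∀ i, i ≤ m →
        (U i = 0 ∨ ∃ j, FP.deg j = n ∧ U i = (FP.FWlt n).mkQ (FP.web j)) := by
      have hlt : ∀ i, i < m →
          (U i = 0 ∨ ∃ j, FP.deg j = n ∧ U i = (FP.FWlt n).mkQ (FP.web j)) := by
        intro i hi
        rcases hEor (i + 1) (by omega) (by omega) with ⟨ht, hb⟩ | ⟨ht, hb⟩
        · rw [show i + 1 - 1 = i from rfl] at hb
          rw [← hb]; exact hba _ (hrdegE (i + 1) (by omega) (by omega))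
        · rw [show i + 1 - 1 = i from rfl] at ht
          rw [← ht]; exact hta _ (hrdegE (i + 1) (by omega) (by omega))
      intro i hi
      rcases Nat.lt_or_ge i m with h | h
      · exact hlt i h
      · have him : i = m := by omega
        rw [him, ← hU0]
        exact hlt 0 (by omega)
    set cs : FP.CancelingSeq n :=
      { s := List.ofFn (fun i : Fin m => sg (i.1 + 1) • FP.rel (E (i.1 + 1)))
        w := List.ofFn (fun i : Fin (m + 1) => U i.1)
        nonempty := by rw [List.length_ofFn]; omega
        len := by rw [List.length_ofFn, List.length_ofFn]
        signed := by
          intro z hz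
          rw [List.mem_ofFn] at hz
          obtain ⟨i, hi⟩ := hz
          refine ⟨E (i.1 + 1), ?_, hrdegE (i.1 + 1) (by omega) (by omega)⟩
          rw [← hi]
          by_cases h : t (E (i.1 + 1)) = U (i.1 + 1)
          · left; simp only [hsg]; rw [if_pos h, one_smul]
          · right; simp only [hsg]; rw [if_neg h, neg_one_smul]
        w_mem := by
          intro u hu
          rw [List.mem_ofFn] at hu
          obtain ⟨i, hi⟩ := hu
          rw [← hi]
          exact hUadm i.1 (by omega)
        w_mid_ne := by
          intro k hk1 hk2
          rw [List.length_ofFn] at hk2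
          rw [List.getD_eq_getElem _ _ (by rw [List.length_ofFn]; omega), List.getElem_ofFn]
          exact hUnz k hk1 hk2
        w_cycle := by
          rw [List.length_ofFn]
          rw [List.getD_eq_getElem _ _ (by rw [List.length_ofFn]; omega),
            List.getD_eq_getElem _ _ (by rw [List.length_ofFn]; omega),
            List.getElem_ofFn, List.getElem_ofFn]
          exact hU0
        lead_step := by
          intro k hk
          rw [List.length_ofFn] at hk
          rw [List.getD_eq_getElem _ _ (by rw [List.length_ofFn]; omega), List.getElem_ofFn,
            List.getD_eq_getElem _ _ (by rw [List.length_ofFn]; omega), List.getElem_ofFn,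
            List.getD_eq_getElem _ _ (by rw [List.length_ofFn]; omega), List.getElem_ofFn]
          have hst := hstep (k + 1) (by omega) (by omega)
          rw [show k + 1 - 1 = k from rfl] at hst
          exact hst } with hcs
    have htot : cs.total = ∑ i : Fin m, sg (i.1 + 1) • FP.rel (E (i.1 + 1)) := by
      have hrfl : cs.total
          = (List.ofFn (fun i : Fin m => sg (i.1 + 1) • FP.rel (E (i.1 + 1)))).sum := rfl
      rw [hrfl]
      exact List.sum_ofFn
    have hreprtot : ∀ q : P, FP.rel.repr cs.total q =
        ∑ i : Fin m, sg (i.1 + 1) * (if E (i.1 + 1) = q then 1 else 0) := by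
      intro q
      rw [htot, map_sum, Finsupp.finset_sum_apply]
      refine Finset.sum_congr rfl (fun i _ => ?_)
      rw [map_smul, Finsupp.smul_apply, Module.Basis.repr_self, smul_eq_mul, Finsupp.single_apply]
    have htot_out : ∀ q : P, q ∉ S → FP.rel.repr cs.total q = 0 := by
      intro q hq
      rw [hreprtot]
      refine Finset.sum_eq_zero (fun i _ => ?_)
      rw [if_neg, mul_zero]
      intro h
      exact hq (h ▸ hES (i.1 + 1) (by omega) (by omega))
    have htot_p0 : FP.rel.repr cs.total (E 1) = sg 1 := by
      rw [hreprtot]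
      rw [Finset.sum_eq_single_of_mem (⟨0, by omega⟩ : Fin m) (Finset.mem_univ _)]
      · simp
      · intro i _ hi0
        have hni : ¬ E (i.1 + 1) = E 1 := by
          intro h
          have := hEinj (i.1 + 1) 1 (by omega) (by omega) (by omega) (by omega) h
          exact hi0 (Fin.ext (show i.1 = 0 by omega))
        rw [if_neg hni, mul_zero]
    have hltot : FP.lead n cs.total = 0 := by
      rw [htot]
      have hterm : ∀ i : Fin m,
          FP.lead n (sg (i.1 + 1) • FP.rel (E (i.1 + 1))) = U (i.1 + 1) - U i.1 := by
        intro i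
        have := hstep (i.1 + 1) (by omega) (by omega)
        rw [show i.1 + 1 - 1 = i.1 from rfl] at this
        exact this
      rw [show FP.lead n (∑ i : Fin m, sg (i.1 + 1) • FP.rel (E (i.1 + 1)))
          = ∑ i : Fin m, FP.lead n (sg (i.1 + 1) • FP.rel (E (i.1 + 1))) from by
        simp only [FilteredPresentation.lead, map_sum]]
      rw [Finset.sum_congr rfl (fun i _ => hterm i)]
      rw [Fin.sum_univ_eq_sum_range (fun j => U (j + 1) - U j) m]
      rw [Finset.sum_range_sub U m]
      rw [← hU0, sub_self]
    set a0 : K := a (E 1) * sg 1 with ha0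
    set y' : R := y - a0 • cs.total with hy'
    have hval : ∀ q : P, FP.rel.repr y' q = a q - a0 * FP.rel.repr cs.total q := by
      intro q
      rw [hy', map_sub, map_smul, Finsupp.sub_apply, Finsupp.smul_apply, smul_eq_mul]
    have hE1S : E 1 ∈ S := hES 1 le_rfl hm
    have hsupp' : (FP.rel.repr y').support ⊆ S.erase (E 1) := by
      intro q hq
      rw [Finsupp.mem_support_iff] at hq
      rw [Finset.mem_erase]
      constructor
      · intro hqE
        apply hq
        rw [hval, hqE, htot_p0, ha0, mul_assoc, hsg2, mul_one, sub_self]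
      · by_contra hqS
        apply hq
        rw [hval, htot_out q hqS, mul_zero, sub_zero]
        exact Finsupp.notMem_support_iff.mp hqS
    have hcard' : (FP.rel.repr y').support.card ≤ N := by
      have h1 := Finset.card_le_card hsupp'
      rw [Finset.card_erase_of_mem hE1S] at h1
      have h2 : S.card ≤ N + 1 := hcard
      omega
    have hsuppdeg' : ↑(FP.rel.repr y').support ⊆ {p : P | FP.rdeg p = n} :=
      fun q hq => hsupp (Finset.mem_coe.mpr (Finset.mem_of_mem_erase
        (hsupp' (Finset.mem_coe.mp hq))))
    have hdy' : FP.d y' ∈ FP.FWlt n := by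
      have hl0 : FP.lead n y' = 0 := by
        rw [hy', FP.lead_sub, FP.lead_smul, hltot, hleady, smul_zero, sub_zero]
      rw [FilteredPresentation.lead, Submodule.mkQ_apply, Submodule.Quotient.mk_eq_zero] at hl0
      exact hl0
    obtain ⟨k, cseq, bb, hsum'⟩ := ih y' hcard' hsuppdeg' hdy'
    refine ⟨k + 1, Fin.cons cs cseq, Fin.cons a0 bb, ?_⟩
    rw [Fin.sum_univ_succ]
    simp only [Fin.cons_zero, Fin.cons_succ]
    rw [← hsum', hy']
    abel
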